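/- Let M be a matroid with weights w': U → ℝ_{≥0}, let B be the maximum-weight basis of M (chosen by the greedy algorithm), and for an independent set A let R(A) be the maximum-weight subset R of B such that A ∪ R is a basis of M. Then R(A) equals the maximum-weight basis of the contraction matroid M/A. -/

import Mathlib

open scoped BigOperators

open Set

/-- Splitting off one element of a finite sum over a set. -/
private lemma finsum_mem_eq_add (w : α → ℝ) {s : Set α} (hs : s.Finite) {a : α} (ha : a ∈ s) :
    ∑ᶠ x ∈ s, w x = w a + ∑ᶠ x ∈ s \ {a}, w x := by
  have h : s = insert a (s \ {a}) := by
    rw [Set.insert_diff_singleton, Set.insert_eq_of_mem ha]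
  conv_lhs => rw [h]
  exact finsum_mem_insert w (fun h' => h'.2 rfl) (hs.diff)

/-- A finite set `D` with `e ∈ cl D` contains a minimal such subset. -/
private lemma exists_min_closure {α : Type*} (M : Matroid α) (e : α) :
    ∀ n (D : Set α), D.Finite → D.ncard ≤ n → e ∈ M.closure D →
      ∃ C ⊆ D, e ∈ M.closure C ∧ ∀ f ∈ C, e ∉ M.closure (C \ {f}) := by
  intro n
  induction n with
  | zero =>
    intro D hD hle he
    have : D = ∅ := by rwa [← Set.ncard_eq_zero hD, ← Nat.le_zero]
    subst this
    exact ⟨∅, subset_rfl, he, fun f hf => absurd hf (Set.notMem_empty f)⟩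
  | succ n ih =>
    intro D hD hle he
    by_cases h : ∀ f ∈ D, e ∉ M.closure (D \ {f})
    · exact ⟨D, subset_rfl, he, h⟩
    · push_neg at h
      obtain ⟨f, hf, hef⟩ := h
      have hlt : (D \ {f}).ncard < D.ncard := Set.ncard_diff_singleton_lt_of_mem hf hD
      obtain ⟨C, hC, h1, h2⟩ := ih (D \ {f}) (hD.diff) (by omega) hef
      exact ⟨C, hC.trans diff_subset, h1, h2⟩

/-- Symmetric exchange property for bases of a finite matroid. -/
private lemma symm_exch {α : Type*} {M : Matroid α} [M.Finite] {B₁ B₂ : Set α}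
    (h₁ : M.IsBase B₁) (h₂ : M.IsBase B₂) {e : α} (heB₁ : e ∈ B₁) (heB₂ : e ∉ B₂) :
    ∃ f ∈ B₂, f ∉ B₁ ∧ M.IsBase (insert f (B₁ \ {e})) ∧ M.IsBase (insert e (B₂ \ {f})) := by
  have hE : M.E.Finite := M.ground_finite
  have heE : e ∈ M.E := h₁.subset_ground heB₁
  have hecl : e ∉ M.closure (B₁ \ {e}) := h₁.indep.notMem_closure_diff_of_mem heB₁
  have heB2cl : e ∈ M.closure B₂ := by rw [h₂.closure_eq]; exact heE
  obtain ⟨C, hCB₂, heC, hCmin⟩ :=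
    exists_min_closure M e B₂.ncard B₂ (hE.subset h₂.subset_ground) le_rfl heB2cl
  have hnotsub : ¬ (C ⊆ M.closure (B₁ \ {e})) := fun h =>
    hecl ((M.closure_subset_closure_of_subset_closure h) heC)
  obtain ⟨f, hfC, hf⟩ := not_subset.1 hnotsub
  have hfB₂ : f ∈ B₂ := hCB₂ hfC
  have hfe : f ≠ e := fun h => heB₂ (h ▸ hfB₂)
  have hfB₁ : f ∉ B₁ := fun h =>
    hf (M.subset_closure (B₁ \ {e}) ((diff_subset).trans h₁.subset_ground) ⟨h, hfe⟩)
  -- first base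
  have hd1 : M.Indep (B₁ \ {e}) := h₁.indep.subset diff_subset
  have hind : M.Indep (insert f (B₁ \ {e})) := by
    rw [hd1.insert_indep_iff_of_notMem (fun h => hfB₁ h.1)]
    exact ⟨h₂.subset_ground hfB₂, hf⟩
  have hbase1 : M.IsBase (insert f (B₁ \ {e})) := h₁.exchange_isBase_of_indep hfB₁ hind
  -- second base
  have hnecl : e ∉ M.closure (C \ {f}) := hCmin f hfC
  have hex : f ∈ M.closure (insert e (C \ {f})) := by
    have hmem : e ∈ M.closure (insert f (C \ {f})) \ M.closure (C \ {f}) :=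
      ⟨by rwa [Set.insert_diff_singleton, Set.insert_eq_of_mem hfC], hnecl⟩
    exact (Matroid.closure_exchange hmem).1
  have hsubE : insert e (B₂ \ {f}) ⊆ M.E :=
    insert_subset heE ((diff_subset).trans h₂.subset_ground)
  have hsp : M.Spanning (insert e (B₂ \ {f})) := by
    rw [Matroid.spanning_iff_ground_subset_closure hsubE, ← h₂.closure_eq]
    apply Matroid.closure_subset_closure_of_subset_closure
    intro x hx
    by_cases hxf : x = f
    · subst hxf
      exact M.closure_subset_closure
        (insert_subset_insert ((diff_subset_diff_left hCB₂))) hex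
    · exact M.subset_closure _ hsubE (Or.inr ⟨hx, hxf⟩)
  obtain ⟨B₃, hB₃, hB₃sub⟩ := hsp.exists_isBase_subset
  have hcard : (insert e (B₂ \ {f})).encard = B₂.encard := by
    rw [Set.encard_insert_of_notMem (fun h => heB₂ h.1),
      Set.encard_diff_singleton_add_one hfB₂]
  have heq : B₃ = insert e (B₂ \ {f}) := by
    refine (hE.subset hsubE).eq_of_subset_of_encard_le' hB₃sub ?_
    rw [hcard, hB₃.encard_eq_encard_of_isBase h₂]
  exact ⟨f, hfB₂, hfB₁, hbase1, heq ▸ hB₃⟩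

/-- Let `B` be the maximum-weight basis of a matroid with distinct nonnegative weights, `A` an
independent set, and `R ⊆ B` the maximum-weight subset of `B` completing `A` to a basis.  Then
`R` is the maximum-weight basis of the contraction `M/A` (i.e. `R` is disjoint from `A`,
`A ∪ R` is a basis, and `R` has maximum weight among all such sets). -/
theorem stmt7 {α : Type*} (M : Matroid α) [M.Finite] (w' : α → ℝ)
    (hw'nonneg : ∀ e, 0 ≤ w' e) (hw'inj : Function.Injective w')
    (B : Set α) (hB : M.IsBase B)
    (hBmax : ∀ B', M.IsBase B' → ∑ᶠ e ∈ B', w' e ≤ ∑ᶠ e ∈ B, w' e)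
    (A : Set α) (hA : M.Indep A)
    (R : Set α) (hRB : R ⊆ B) (hdisj : Disjoint R A) (hbase : M.IsBase (A ∪ R))
    (hRmax : ∀ R', R' ⊆ B → Disjoint R' A → M.IsBase (A ∪ R') →
      ∑ᶠ e ∈ R', w' e ≤ ∑ᶠ e ∈ R, w' e) :
    -- `R` is a basis of `M/A` of maximum weight among all bases of `M/A`
    ∀ R', Disjoint R' A → M.IsBase (A ∪ R') → ∑ᶠ e ∈ R', w' e ≤ ∑ᶠ e ∈ R, w' e := by
  have hE : M.E.Finite := M.ground_finite
  have hBfin : B.Finite := hE.subset hB.subset_ground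
  have key : ∀ n (R' : Set α), (R' \ B).ncard ≤ n → Disjoint R' A → M.IsBase (A ∪ R') →
      ∑ᶠ e ∈ R', w' e ≤ ∑ᶠ e ∈ R, w' e := by
    intro n
    induction n with
    | zero =>
      intro R' hn hdj hb
      have hfin : (R' \ B).Finite :=
        (hE.subset ((subset_union_right).trans hb.subset_ground)).diff
      have hsub : R' ⊆ B := by
        rw [← Set.diff_eq_empty, ← Set.ncard_eq_zero hfin]
        omega
      exact hRmax R' hsub hdj hb
    | succ n ih =>
      intro R' hn hdj hb
      have hR'fin : R'.Finite := hE.subset ((subset_union_right).trans hb.subset_ground)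
      by_cases hsub : R' ⊆ B
      · exact hRmax R' hsub hdj hb
      obtain ⟨e, heR', heB⟩ := not_subset.1 hsub
      have heA : e ∉ A := fun h => Set.disjoint_left.1 hdj heR' h
      obtain ⟨f, hfB, hfAR', hbase1, hbase2⟩ :=
        symm_exch hb hB (Or.inr heR' : e ∈ A ∪ R') heB
      have hfe : f ≠ e := fun h => heB (h ▸ hfB)
      -- weight comparison: w' e < w' f
      have hwef : w' e < w' f := by
        have hsum := hBmax _ hbase2
        have h1 : ∑ᶠ x ∈ insert e (B \ {f}), w' x = w' e + ∑ᶠ x ∈ B \ {f}, w' x :=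
          finsum_mem_insert w' (fun h => heB h.1) (hBfin.diff)
        have h2 : ∑ᶠ x ∈ B, w' x = w' f + ∑ᶠ x ∈ B \ {f}, w' x :=
          finsum_mem_eq_add w' hBfin hfB
        rw [h1, h2] at hsum
        have hle : w' e ≤ w' f := by linarith
        exact hle.lt_of_ne (fun h => hfe (hw'inj h.symm))
      set R'' := insert f (R' \ {e}) with hR''
      have hAR'' : A ∪ R'' = insert f ((A ∪ R') \ {e}) := by
        ext x
        have hxe : x ∈ A → x ≠ e := fun h h' => heA (h' ▸ h)
        simp only [hR'', Set.mem_union, Set.mem_insert_iff, Set.mem_diff,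
          Set.mem_singleton_iff]
        constructor
        · rintro (hx | hx | ⟨hx, hxe'⟩)
          · exact Or.inr ⟨Or.inl hx, hxe hx⟩
          · exact Or.inl hx
          · exact Or.inr ⟨Or.inr hx, hxe'⟩
        · rintro (hx | ⟨hx | hx, hxe'⟩)
          · exact Or.inr (Or.inl hx)
          · exact Or.inl hx
          · exact Or.inr (Or.inr ⟨hx, hxe'⟩)
      have hbase'' : M.IsBase (A ∪ R'') := hAR'' ▸ hbase1
      have hdj'' : Disjoint R'' A := by
        rw [Set.disjoint_left]
        rintro x (rfl | hx)
        · exact fun hxA => hfAR' (Or.inl hxA)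
        · exact fun hxA => Set.disjoint_left.1 hdj hx.1 hxA
      have hcard'' : (R'' \ B).ncard ≤ n := by
        have hset : R'' \ B = (R' \ B) \ {e} := by
          ext x
          simp only [hR'', Set.mem_diff, Set.mem_insert_iff, Set.mem_singleton_iff]
          constructor
          · rintro ⟨rfl | ⟨hx, hxe⟩, hxB⟩
            · exact absurd hfB hxB
            · exact ⟨⟨hx, hxB⟩, hxe⟩
          · rintro ⟨⟨hx, hxB⟩, hxe⟩
            exact ⟨Or.inr ⟨hx, hxe⟩, hxB⟩
        have hlt : ((R' \ B) \ {e}).ncard < (R' \ B).ncard :=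
          Set.ncard_diff_singleton_lt_of_mem ⟨heR', heB⟩ (hR'fin.diff)
        rw [hset]
        omega
      have hsum'' := ih R'' hcard'' hdj'' hbase''
      have hfR' : f ∉ R' \ {e} := fun h => hfAR' (Or.inr h.1)
      have h3 : ∑ᶠ x ∈ R'', w' x = w' f + ∑ᶠ x ∈ R' \ {e}, w' x :=
        finsum_mem_insert w' hfR' (hR'fin.diff)
      have h4 : ∑ᶠ x ∈ R', w' x = w' e + ∑ᶠ x ∈ R' \ {e}, w' x :=
        finsum_mem_eq_add w' hR'fin heR'
      rw [h3] at hsum''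
      rw [h4]
      linarith
  intro R' hdj hb
  exact key (R' \ B).ncard R' le_rfl hdj hb
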